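/- The only integers x, z satisfying x(3x^4 + 20x^2 + 10) = z^2 are x = 0 and z = 0. -/

import Mathlib

/-- Any Pell pair for D = 30 has even second coordinate. -/
lemma pell_even (a c : ℤ) (h : a^2 = 30*c^2 + 1) : ∃ k, c = 2*k := by
  rcases Int.even_or_odd c with ⟨k, hk⟩ | ⟨k, hk⟩
  · exact ⟨k, by omega⟩
  · exfalso
    have h4 : (a : ZMod 4)^2 = 30*(2*(k : ZMod 4)+1)^2 + 1 := by
      have h2 := congrArg (Int.cast : ℤ → ZMod 4) h
      rw [hk] at h2
      push_cast at h2
      exact h2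
    have hdec : ∀ A K : ZMod 4, A^2 ≠ 30*(2*K+1)^2 + 1 := by decide
    exact hdec _ _ h4

/-- Classification: every Pell solution for D=30 with A,B ≥ 0 is a square or ε times a square. -/
lemma pell_classify : ∀ n : ℕ, ∀ A B : ℤ, B.natAbs ≤ n → 0 < A → 0 ≤ B → A^2 = 30*B^2 + 1 →
    (∃ a c, 0 < a ∧ 0 ≤ c ∧ a^2 = 30*c^2+1 ∧ A = a^2+30*c^2 ∧ B = 2*a*c) ∨
    (∃ a c, 0 < a ∧ 0 ≤ c ∧ a^2 = 30*c^2+1 ∧ A = 11*(a^2+30*c^2)+120*a*c ∧ B = 2*(a^2+30*c^2)+22*a*c) := by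
  intro n
  induction n with
  | zero =>
      intro A B hn hA hB hp
      have hB0 : B = 0 := by omega
      subst hB0
      have : A = 1 := by nlinarith
      exact Or.inl ⟨1, 0, by norm_num, by norm_num, by ring, by omega, by ring⟩
  | succ n ih =>
      intro A B hn hA hB hp
      rcases lt_or_ge B 2 with hB2 | hB2
      · interval_cases B
        · have : A = 1 := by nlinarith
          exact Or.inl ⟨1, 0, by norm_num, by norm_num, by ring, by omega, by ring⟩
        · exfalso
          have h31 : A^2 = 31 := by linarith
          have hA6 : A ≤ 6 := by nlinarith
          interval_cases A <;> omega
      · -- descend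
        set A' := 11*A - 60*B with hA'
        set B' := 11*B - 2*A with hB'
        have hp' : A'^2 = 30*B'^2 + 1 := by rw [hA', hB']; ring_nf; linarith [hp]
        have hApos : 0 < A' := by nlinarith
        have hBpos : 0 ≤ B' := by nlinarith
        have hBlt : B' < B := by nlinarith
        have hn' : B'.natAbs ≤ n := by omega
        rcases ih A' B' hn' hApos hBpos hp' with ⟨a, c, ha, hc, hpa, hAe, hBe⟩ | ⟨a, c, ha, hc, hpa, hAe, hBe⟩
        · right
          refine ⟨a, c, ha, hc, hpa, ?_, ?_⟩
          · have : A = 11*A' + 60*B' := by rw [hA', hB']; ring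
            rw [this, hAe, hBe]; ring
          · have : B = 2*A' + 11*B' := by rw [hA', hB']; ring
            rw [this, hAe, hBe]; ring
        · left
          refine ⟨11*a+60*c, 2*a+11*c, by positivity, by positivity, by nlinarith, ?_, ?_⟩
          · have : A = 11*A' + 60*B' := by rw [hA', hB']; ring
            rw [this, hAe, hBe]; ring
          · have : B = 2*A' + 11*B' := by rw [hA', hB']; ring
            rw [this, hAe, hBe]; ring

lemma pell_cop (a c : ℤ) (h : a^2 = 30*c^2 + 1) : IsCoprime a (5*c) :=
  ⟨a, -6*c, by linear_combination h⟩

lemma pell_odd (a c : ℤ) (h : a^2 = 30*c^2 + 1) : IsCoprime a 2 := by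
  rcases Int.even_or_odd a with ⟨k, hk⟩ | ⟨k, hk⟩
  · exfalso
    obtain ⟨t, ht⟩ : ∃ t : ℤ, 2*t = 1 := ⟨2*k^2 - 15*c^2, by subst hk; linear_combination h⟩
    omega
  · exact ⟨1, -k, by rw [hk]; ring⟩

lemma no_V : ∀ n : ℕ, ∀ A B : ℤ, B.natAbs ≤ n → 0 < A → 0 < B → A^2 = 30*B^2+1 →
    ((∃ r, B = 5*r^2) ∨ (∃ w s, B = 10*w^2 ∧ A = s^2)) → False := by
  intro n
  induction n with
  | zero => intro A B hn hA hB hp _; omega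
  | succ n ih =>
      intro A B hn hA hB hp hV
      have hBcl := pell_classify B.natAbs A B le_rfl hA (le_of_lt hB) hp
      rcases hV with ⟨r, hr⟩ | ⟨w, s, hw, hs⟩
      · -- V1 : B = 5 r^2
        rcases hBcl with ⟨a, c, ha, hc, hpa, hAe, hBe⟩ | ⟨a, c, ha, hc, hpa, hAe, hBe⟩
        · -- R case: 2ac = 5r^2
          have hcpos : 0 < c := by
            rcases lt_or_ge 0 c with h | h
            · exact h
            · exfalso; nlinarith [mul_nonneg ha.le (neg_nonneg.mpr h)]
          have hBr : 2*a*c = 5*r^2 := hBe.symm.trans hr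
          have hre : ∃ r1, r = 2*r1 := by
            rcases Int.even_or_odd r with ⟨k, hk⟩ | ⟨k, hk⟩
            · exact ⟨k, by omega⟩
            · exfalso
              obtain ⟨t, ht⟩ : ∃ t : ℤ, 2*t = 5 := ⟨a*c - 10*k^2 - 10*k, by subst hk; nlinarith [hBr]⟩
              omega
          obtain ⟨r1, hr1⟩ := hre
          have hac : a * c = 10*r1^2 := by subst hr1; nlinarith [hBr]
          have hcop5 : IsCoprime a (5*c) := pell_cop a c hpa
          have hcop2 : IsCoprime a 2 := pell_odd a c hpa
          have hcop10c : IsCoprime a (10*c) := by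
            have h2 : IsCoprime a (2*(5*c)) := hcop2.mul_right hcop5
            convert h2 using 1; ring
          have hsq : a * (10*c) = (10*r1)^2 := by linear_combination 10*hac
          obtain ⟨s, hs⟩ := Int.sq_of_isCoprime hcop10c hsq
          have hase : a = s^2 := by
            rcases hs with hs | hs
            · exact hs
            · exfalso; nlinarith [sq_nonneg s]
          have hs0 : s ≠ 0 := by intro h0; rw [h0] at hase; simp at hase; omega
          have hcops2_10 : IsCoprime (s^2) 10 := by
            have h1 : IsCoprime (s^2) 2 := hase ▸ hcop2
            have h2 : IsCoprime (s^2) 5 := (hase ▸ hcop5).of_mul_right_left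
            have h3 : IsCoprime (s^2) (2*5) := h1.mul_right h2
            simpa using h3
          have hdvd : s^2 ∣ r1^2 := by
            have h1 : s^2 ∣ 10 * r1^2 := ⟨c, by linear_combination c*hase - hac⟩
            exact hcops2_10.dvd_of_dvd_mul_left h1
          obtain ⟨w, hw⟩ := (Int.pow_dvd_pow_iff (two_ne_zero)).mp hdvd
          have hcw : c = 10*w^2 := by
            have h1 : s^2 * c = s^2 * (10*w^2) := by
              subst hw; linear_combination hac - c*hase
            exact mul_left_cancel₀ (pow_ne_zero 2 hs0) h1
          have hclt : c < B := by nlinarith [mul_le_mul_of_nonneg_right (by linarith : (2:ℤ) ≤ 2*a) hcpos.le]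
          exact ih a c (by omega) ha hcpos hpa (Or.inr ⟨w, s, hcw, hase⟩)
        · -- εR case impossible mod 4
          exfalso
          have h1 : ((a:ZMod 4))^2 = 30*(c:ZMod 4)^2+1 := by
            have := congrArg (Int.cast : ℤ → ZMod 4) hpa; push_cast at this; exact this
          have hint : 2*(a^2+30*c^2)+22*a*c = 5*r^2 := hBe.symm.trans hr
          have h2 : 2*((a:ZMod 4)^2+30*(c:ZMod 4)^2)+22*(a:ZMod 4)*(c:ZMod 4) = 5*(r:ZMod 4)^2 := by
            have := congrArg (Int.cast : ℤ → ZMod 4) hint; push_cast at this; exact this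
          have hdec : ∀ A C R : ZMod 4, A^2 = 30*C^2+1 → 2*(A^2+30*C^2)+22*A*C ≠ 5*R^2 := by decide
          exact hdec _ _ _ h1 h2
      · -- V2 : B = 10 w^2, A = s^2
        rcases hBcl with ⟨a, c, ha, hc, hpa, hAe, hBe⟩ | ⟨a, c, ha, hc, hpa, hAe, hBe⟩
        · have hcpos : 0 < c := by
            rcases lt_or_ge 0 c with h | h
            · exact h
            · exfalso; nlinarith [mul_nonneg ha.le (neg_nonneg.mpr h)]
          have hBw : 2*a*c = 10*w^2 := hBe.symm.trans hw
          have hac : a * c = 5*w^2 := by linarith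
          have hcop5 : IsCoprime a (5*c) := pell_cop a c hpa
          have hsq : a * (5*c) = (5*w)^2 := by linear_combination 5*hac
          obtain ⟨p, hp'⟩ := Int.sq_of_isCoprime hcop5 hsq
          have hap : a = p^2 := by
            rcases hp' with h' | h'
            · exact h'
            · exfalso; nlinarith [sq_nonneg p]
          have hp0 : p ≠ 0 := by intro h0; rw [h0] at hap; simp at hap; omega
          have hcopp2_5 : IsCoprime (p^2) 5 := (hap ▸ hcop5).of_mul_right_left
          have hdvd : p^2 ∣ w^2 := by
            have h1 : p^2 ∣ 5 * w^2 := ⟨c, by linear_combination c*hap - hac⟩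
            exact hcopp2_5.dvd_of_dvd_mul_left h1
          obtain ⟨q, hq⟩ := (Int.pow_dvd_pow_iff (two_ne_zero)).mp hdvd
          have hcq : c = 5*q^2 := by
            have h1 : p^2 * c = p^2 * (5*q^2) := by
              subst hq; linear_combination hac - c*hap
            exact mul_left_cancel₀ (pow_ne_zero 2 hp0) h1
          have hclt : c < B := by nlinarith [mul_le_mul_of_nonneg_right (by linarith : (2:ℤ) ≤ 2*a) hcpos.le]
          exact ih a c (by omega) ha hcpos hpa (Or.inl ⟨q, hcq⟩)
        · exfalso
          have h1 : ((a:ZMod 8))^2 = 30*(c:ZMod 8)^2+1 := by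
            have := congrArg (Int.cast : ℤ → ZMod 8) hpa; push_cast at this; exact this
          have hint : 11*(a^2+30*c^2)+120*a*c = s^2 := hAe.symm.trans hs
          have h2 : 11*((a:ZMod 8)^2+30*(c:ZMod 8)^2)+120*(a:ZMod 8)*(c:ZMod 8) = (s:ZMod 8)^2 := by
            have := congrArg (Int.cast : ℤ → ZMod 8) hint; push_cast at this; exact this
          have hdec : ∀ A C S : ZMod 8, A^2 = 30*C^2+1 → 11*(A^2+30*C^2)+120*A*C ≠ S^2 := by decide
          exact hdec _ _ _ h1 h2

lemma layer1_aux : ∀ n : ℕ, ∀ q s : ℤ, q.natAbs ≤ n → 0 < q → 0 ≤ s → 3*s^2 = 10*q^2 - 7 →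
    ∃ A B : ℤ, A^2 = 30*B^2+1 ∧ q = A+3*B ∧ (s = A+10*B ∨ s = -(A+10*B)) := by
  intro n
  induction n with
  | zero => intro q s hn hq hs0 h; omega
  | succ n ih =>
      intro q s hn hq hs0 h
      rcases lt_or_ge q 3 with hq3 | hq3
      · interval_cases q
        · -- q = 1 : s^2 = 1
          have hs1 : s = 1 := by nlinarith
          exact ⟨1, 0, by ring, by ring, Or.inl (by omega)⟩
        · -- q = 2 : 3 s^2 = 33, impossible
          exfalso
          have h1 : s^2 = 11 := by linarith
          have h2 : s ≤ 3 := by nlinarith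
          interval_cases s <;> omega
      · -- descent
        have hspos : 0 < s := by nlinarith
        set s₁ := 11*s - 20*q with hs₁
        set q₁ := 11*q - 6*s with hq₁
        have h' : 3*s₁^2 = 10*q₁^2 - 7 := by rw [hs₁, hq₁]; ring_nf; ring_nf at h; linarith
        have hq₁pos : 0 < q₁ := by nlinarith
        have hq₁lt : q₁ < q := by nlinarith
        -- apply IH to (q₁, |s₁|)
        have key : ∃ A B : ℤ, A^2 = 30*B^2+1 ∧ q₁ = A+3*B ∧ (s₁ = A+10*B ∨ s₁ = -(A+10*B)) := by
          rcases le_or_gt 0 s₁ with hpos | hneg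
          · exact ih q₁ s₁ (by omega) hq₁pos hpos h'
          · obtain ⟨A, B, h1, h2, h3⟩ := ih q₁ (-s₁) (by omega) hq₁pos (by omega) (by nlinarith)
            exact ⟨A, B, h1, h2, by omega⟩
        obtain ⟨A', B', hp', hqe', hse'⟩ := key
        have hsrec : s = 11*s₁ + 20*q₁ := by rw [hs₁, hq₁]; ring
        have hqrec : q = 6*s₁ + 11*q₁ := by rw [hs₁, hq₁]; ring
        rcases hse' with hse' | hse'
        · refine ⟨11*A'+60*B', 2*A'+11*B', by linear_combination hp', ?_, Or.inl ?_⟩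
          · rw [hqrec, hse', hqe']; ring
          · rw [hsrec, hse', hqe']; ring
        · refine ⟨11*A'-60*B', -2*A'+11*B', by linear_combination hp', ?_, Or.inr ?_⟩
          · rw [hqrec, hse', hqe']; ring
          · rw [hsrec, hse', hqe']; ring

/-- mod 16 contradiction for the subcase  c = r², a+10c = 5t²  (and its mirror). -/
lemma caseI (a c r t : ℤ) (hpa : a^2 = 30*c^2+1) (hc : c = r^2)
    (h5 : a + 10*c = 5*t^2 ∨ 10*c - a = 5*t^2) : False := by
  -- c is even, hence r is even, c = 4 r₁²
  obtain ⟨k, hk⟩ := pell_even a c hpa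
  have hre : ∃ r1, r = 2*r1 := by
    rcases Int.even_or_odd r with ⟨m, hm⟩ | ⟨m, hm⟩
    · exact ⟨m, by omega⟩
    · exfalso
      obtain ⟨u, hu⟩ : ∃ u : ℤ, 2*u = 1 := ⟨k - 2*m^2 - 2*m, by subst hm hc; linear_combination -hk⟩
      omega
  obtain ⟨r1, hr1⟩ := hre
  have hc4 : c = 4*r1^2 := by subst hr1 hc; ring
  have h1 : ((a:ZMod 16))^2 = 30*(4*(r1:ZMod 16)^2)^2+1 := by
    have : a^2 = 30*(4*r1^2)^2+1 := by rw [← hc4]; exact hpa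
    have := congrArg (Int.cast : ℤ → ZMod 16) this; push_cast at this; exact this
  rcases h5 with h5 | h5
  · have h2 : (a:ZMod 16) + 10*(4*(r1:ZMod 16)^2) = 5*(t:ZMod 16)^2 := by
      have : a + 10*(4*r1^2) = 5*t^2 := by rw [← hc4]; exact h5
      have := congrArg (Int.cast : ℤ → ZMod 16) this; push_cast at this; exact this
    have hdec : ∀ A R T : ZMod 16, A^2 = 30*(4*R^2)^2+1 → A + 10*(4*R^2) ≠ 5*T^2 := by decide
    exact hdec _ _ _ h1 h2
  · have h2 : 10*(4*(r1:ZMod 16)^2) - (a:ZMod 16) = 5*(t:ZMod 16)^2 := by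
      have : 10*(4*r1^2) - a = 5*t^2 := by rw [← hc4]; exact h5
      have := congrArg (Int.cast : ℤ → ZMod 16) this; push_cast at this; exact this
    have hdec : ∀ A R T : ZMod 16, A^2 = 30*(4*R^2)^2+1 → 10*(4*R^2) - A ≠ 5*T^2 := by decide
    exact hdec _ _ _ h1 h2

/-- The R-branch final step: 5e² = c(a±10c) with (a,c) Pell, c>0 leads to contradiction. -/
lemma r_branch (a c e : ℤ) (hpa : a^2 = 30*c^2+1) (ha : 0 < a) (hc : 0 < c)
    (key : c * (a + 10*c) = 5*e^2 ∨ c * (10*c - a) = 5*e^2) : False := by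
  have hcopac : IsCoprime c a := (pell_cop a c hpa).of_mul_right_right.symm
  have ha6c : a < 6*c := by nlinarith
  rcases key with key | key
  · have hcop : IsCoprime c (a + 10*c) := by
      have := hcopac.add_mul_left_right 10; rw [show a + 10*c = a + c*10 by ring]; exact this
    have hpos2 : 0 < a + 10*c := by linarith
    have h5 : (5:ℤ) ∣ c ∨ (5:ℤ) ∣ (a + 10*c) := by
      have hprime : Prime (5:ℤ) := by norm_num
      have : (5:ℤ) ∣ c * (a+10*c) := ⟨e^2, key⟩
      exact (hprime.dvd_mul).mp this
    rcases h5 with ⟨c5, hc5⟩ | ⟨m, hm⟩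
    · -- c = 5 c5 : descent via no_V
      have hc5pos : 0 < c5 := by nlinarith
      have hcop' : IsCoprime c5 (a+10*c) := hcop.of_isCoprime_of_dvd_left ⟨5, by rw [hc5]; ring⟩
      have hsq : c5 * (a+10*c) = e^2 := by
        have : 5*(c5*(a+10*c)) = 5*e^2 := by rw [← key, hc5]; ring
        linarith
      obtain ⟨r, hr⟩ := Int.sq_of_isCoprime hcop' hsq
      have hc5r : c5 = r^2 := by
        rcases hr with hr | hr
        · exact hr
        · exfalso; nlinarith [sq_nonneg r]
      exact no_V c.natAbs a c le_rfl ha hc hpa (Or.inl ⟨r, by rw [hc5, hc5r]⟩)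
    · -- a + 10 c = 5 m : caseI
      have hsq : c * m = e^2 := by
        have : 5*(c*m) = 5*e^2 := by rw [← key, hm]; ring
        linarith
      have hcop' : IsCoprime c m := by
        have h1 : IsCoprime c (5*m) := hm ▸ hcop
        exact h1.of_mul_right_right
      obtain ⟨r, hr⟩ := Int.sq_of_isCoprime hcop' hsq
      have hcr : c = r^2 := by
        rcases hr with hr | hr
        · exact hr
        · exfalso; nlinarith [sq_nonneg r]
      have hmpos : 0 < m := by nlinarith
      obtain ⟨t, ht⟩ := Int.sq_of_isCoprime hcop'.symm (by rw [mul_comm] at hsq; exact hsq)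
      have hmt : m = t^2 := by
        rcases ht with ht | ht
        · exact ht
        · exfalso; nlinarith [sq_nonneg t]
      exact caseI a c r t hpa hcr (Or.inl (by rw [hm, hmt]))
  · -- mirror case
    have hcop : IsCoprime c (10*c - a) := by
      have := hcopac.neg_right.add_mul_left_right 10
      rw [show 10*c - a = -a + c*10 by ring]; exact this
    have hpos2 : 0 < 10*c - a := by linarith
    have h5 : (5:ℤ) ∣ c ∨ (5:ℤ) ∣ (10*c - a) := by
      have hprime : Prime (5:ℤ) := by norm_num
      have : (5:ℤ) ∣ c * (10*c - a) := ⟨e^2, key⟩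
      exact (hprime.dvd_mul).mp this
    rcases h5 with ⟨c5, hc5⟩ | ⟨m, hm⟩
    · have hc5pos : 0 < c5 := by nlinarith
      have hcop' : IsCoprime c5 (10*c - a) := hcop.of_isCoprime_of_dvd_left ⟨5, by rw [hc5]; ring⟩
      have hsq : c5 * (10*c - a) = e^2 := by
        have : 5*(c5*(10*c-a)) = 5*e^2 := by rw [← key, hc5]; ring
        linarith
      obtain ⟨r, hr⟩ := Int.sq_of_isCoprime hcop' hsq
      have hc5r : c5 = r^2 := by
        rcases hr with hr | hr
        · exact hr
        · exfalso; nlinarith [sq_nonneg r]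
      exact no_V c.natAbs a c le_rfl ha hc hpa (Or.inl ⟨r, by rw [hc5, hc5r]⟩)
    · have hsq : c * m = e^2 := by
        have : 5*(c*m) = 5*e^2 := by rw [← key, hm]; ring
        linarith
      have hcop' : IsCoprime c m := by
        have h1 : IsCoprime c (5*m) := hm ▸ hcop
        exact h1.of_mul_right_right
      obtain ⟨r, hr⟩ := Int.sq_of_isCoprime hcop' hsq
      have hcr : c = r^2 := by
        rcases hr with hr | hr
        · exact hr
        · exfalso; nlinarith [sq_nonneg r]
      have hmpos : 0 < m := by nlinarith
      obtain ⟨t, ht⟩ := Int.sq_of_isCoprime hcop'.symm (by rw [mul_comm] at hsq; exact hsq)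
      have hmt : m = t^2 := by
        rcases ht with ht | ht
        · exact ht
        · exfalso; nlinarith [sq_nonneg t]
      exact caseI a c r t hpa hcr (Or.inr (by rw [hm, hmt]))

/-- The hard case: no s, e with e > 0 and s² = 3000e⁴+200e²+1. -/
lemma hard (e s : ℤ) (he : 0 < e) (hs : s^2 = 3000*e^4+200*e^2+1) : False := by
  set q : ℤ := 30*e^2+1 with hqdef
  have hq : 0 < q := by positivity
  have heq : 3*s^2 = 10*q^2 - 7 := by rw [hqdef]; linear_combination 3*hs
  have key : ∃ A B : ℤ, A^2 = 30*B^2+1 ∧ q = A+3*B := by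
    rcases le_or_gt 0 s with h0 | h0
    · obtain ⟨A, B, h1, h2, _⟩ := layer1_aux q.natAbs q s le_rfl hq h0 heq
      exact ⟨A, B, h1, h2⟩
    · obtain ⟨A, B, h1, h2, _⟩ := layer1_aux q.natAbs q (-s) le_rfl hq (by omega) (by nlinarith)
      exact ⟨A, B, h1, h2⟩
  obtain ⟨A, B, hp, hqAB⟩ := key
  have hq31 : 31 ≤ q := by nlinarith
  have hApos : 0 < A := by nlinarith [sq_nonneg (A+5*B), sq_nonneg (A-5*B), sq_nonneg B]
  have hBne : B ≠ 0 := by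
    intro h0
    rw [h0] at hp hqAB
    have : A = 1 := by nlinarith
    omega
  have h30e : 30*e^2 = A + 3*B - 1 := by omega
  rcases lt_or_ge 0 B with hBpos | hBneg
  · -- B > 0
    rcases pell_classify B.natAbs A B le_rfl hApos hBpos.le hp with
      ⟨a, c, ha, hc, hpa, hAe, hBe⟩ | ⟨a, c, ha, hc, hpa, hAe, hBe⟩
    · have hcpos : 0 < c := by
        rcases lt_or_ge 0 c with h | h
        · exact h
        · exfalso; nlinarith [mul_nonneg ha.le (neg_nonneg.mpr h)]
      have hkey : c * (a + 10*c) = 5*e^2 := by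
        have h6 : 30*e^2 = (a^2+30*c^2) + 3*(2*a*c) - 1 := by rw [← hAe, ← hBe]; exact h30e
        have h7 : 6*(c*(a+10*c)) = 6*(5*e^2) := by linear_combination -h6 - hpa
        linarith
      exact r_branch a c e hpa ha hcpos (Or.inl hkey)
    · -- εR : impossible mod 3
      exfalso
      have h1 : ((a:ZMod 3))^2 = 30*(c:ZMod 3)^2+1 := by
        have := congrArg (Int.cast : ℤ → ZMod 3) hpa; push_cast at this; exact this
      have hA3 : (30:ℤ)*e^2 = 11*(a^2+30*c^2)+120*a*c + 3*B - 1 := by rw [← hAe]; exact h30e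
      have h2 : (30:ZMod 3)*(e:ZMod 3)^2 = 11*((a:ZMod 3)^2+30*(c:ZMod 3)^2)+120*(a:ZMod 3)*(c:ZMod 3) + 3*(B:ZMod 3) - 1 := by
        have := congrArg (Int.cast : ℤ → ZMod 3) hA3; push_cast at this; exact this
      have hdec : ∀ A C E BB : ZMod 3, A^2 = 30*C^2+1 →
          30*E^2 ≠ 11*(A^2+30*C^2)+120*A*C + 3*BB - 1 := by decide
      exact hdec _ _ _ _ h1 h2
  · -- B < 0
    have hBneg' : 0 < -B := by omega
    have hp' : A^2 = 30*(-B)^2+1 := by linear_combination hp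
    rcases pell_classify (-B).natAbs A (-B) le_rfl hApos hBneg'.le hp' with
      ⟨a, c, ha, hc, hpa, hAe, hBe⟩ | ⟨a, c, ha, hc, hpa, hAe, hBe⟩
    · have hcpos : 0 < c := by
        rcases lt_or_ge 0 c with h | h
        · exact h
        · exfalso; nlinarith [mul_nonneg ha.le (neg_nonneg.mpr h)]
      have hkey : c * (10*c - a) = 5*e^2 := by
        have h30' : 30*e^2 = (a^2+30*c^2) - 3*(2*a*c) - 1 := by
          rw [← hAe]
          have : 3*B = -(3*(2*a*c)) := by rw [← hBe]; ring
          omega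
        have h7 : 6*(c*(10*c-a)) = 6*(5*e^2) := by linear_combination -h30' - hpa
        linarith
      exact r_branch a c e hpa ha hcpos (Or.inr hkey)
    · exfalso
      have h1 : ((a:ZMod 3))^2 = 30*(c:ZMod 3)^2+1 := by
        have := congrArg (Int.cast : ℤ → ZMod 3) hpa; push_cast at this; exact this
      have hA3 : (30:ℤ)*e^2 = 11*(a^2+30*c^2)+120*a*c + 3*B - 1 := by rw [← hAe]; exact h30e
      have h2 : (30:ZMod 3)*(e:ZMod 3)^2 = 11*((a:ZMod 3)^2+30*(c:ZMod 3)^2)+120*(a:ZMod 3)*(c:ZMod 3) + 3*(B:ZMod 3) - 1 := by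
        have := congrArg (Int.cast : ℤ → ZMod 3) hA3; push_cast at this; exact this
      have hdec : ∀ A C E BB : ZMod 3, A^2 = 30*C^2+1 →
          30*E^2 ≠ 11*(A^2+30*C^2)+120*A*C + 3*BB - 1 := by decide
      exact hdec _ _ _ _ h1 h2

lemma cop5 (x : ℤ) (h : ¬ (5:ℤ) ∣ x) : IsCoprime x 5 := by
  rw [Int.isCoprime_iff_gcd_eq_one]
  have hd : (Int.gcd x 5 : ℤ) ∣ 5 := Int.gcd_dvd_right x 5
  have hd' : Int.gcd x 5 ∣ 5 := by exact_mod_cast hd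
  rcases (Nat.prime_five).eq_one_or_self_of_dvd _ hd' with h1 | h5
  · exact h1
  · exfalso
    apply h
    have := Int.gcd_dvd_left (a := x) (b := 5)
    rw [h5] at this
    exact_mod_cast this

lemma cop2 (x : ℤ) (h : ¬ (2:ℤ) ∣ x) : IsCoprime x 2 := by
  obtain ⟨k, hk⟩ : ∃ k, x = 2*k+1 := by
    rcases Int.even_or_odd x with ⟨k, hk⟩ | ⟨k, hk⟩
    · exact absurd ⟨k, by omega⟩ h
    · exact ⟨k, hk⟩
  exact ⟨1, -k, by rw [hk]; ring⟩

theorem case_n_two (x z : ℤ) (h : x * (3*x^4 + 20*x^2 + 10) = z^2) :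
    x = 0 ∧ z = 0 := by
  rcases eq_or_ne x 0 with hx0 | hx0
  · subst hx0
    refine ⟨rfl, ?_⟩
    have hz2 : z^2 = 0 := by linarith
    exact pow_eq_zero_iff two_ne_zero |>.mp hz2
  · exfalso
    have hfpos : 0 < 3*x^4 + 20*x^2 + 10 := by positivity
    have hxpos : 0 < x := by
      rcases lt_or_ge 0 x with h1 | h1
      · exact h1
      · have hxneg : x < 0 := lt_of_le_of_ne h1 hx0
        nlinarith [sq_nonneg z, mul_pos (neg_pos.mpr hxneg) hfpos]
    by_cases h2 : (2:ℤ) ∣ x <;> by_cases h5 : (5:ℤ) ∣ x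
    · -- x = 10 e : the hard case
      obtain ⟨e, he⟩ : ∃ e, x = 10*e := by
        obtain ⟨u, hu⟩ := h2; obtain ⟨v, hv⟩ := h5
        exact ⟨_, Int.eq_mul_of_ediv_eq_right (by omega : (10:ℤ) ∣ x) rfl⟩
      have hepos : 0 < e := by linarith
      have hz10 : (10:ℤ) ∣ z := by
        have h2z : (2:ℤ) ∣ z := by
          refine (by norm_num : Prime (2:ℤ)).dvd_of_dvd_pow (n := 2) ?_
          exact ⟨x*(3*x^4+20*x^2+10)/2, by rw [← h]; obtain ⟨u,hu⟩ := h2; subst hu; ring_nf; omega⟩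
        have h5z : (5:ℤ) ∣ z := by
          refine (by norm_num : Prime (5:ℤ)).dvd_of_dvd_pow (n := 2) ?_
          exact ⟨x*(3*x^4+20*x^2+10)/5, by rw [← h]; obtain ⟨u,hu⟩ := h5; subst hu; ring_nf; omega⟩
        omega
      obtain ⟨z₁, hz₁⟩ := hz10
      have heq : e * (3000*e^4+200*e^2+1) = z₁^2 := by
        have h100 : (100:ℤ) * (e * (3000*e^4+200*e^2+1)) = 100 * z₁^2 := by
          rw [he] at h; rw [hz₁] at h; linear_combination h
        linarith
      have hcop : IsCoprime e (3000*e^4+200*e^2+1) := by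
        have h1 : IsCoprime e 1 := isCoprime_one_right
        have h2 := h1.add_mul_left_right (3000*e^3+200*e)
        have h3 : 1 + e*(3000*e^3+200*e) = 3000*e^4+200*e^2+1 := by ring
        rwa [h3] at h2
      have hsq2 : (3000*e^4+200*e^2+1) * e = z₁^2 := by linear_combination heq
      obtain ⟨s, hs⟩ := Int.sq_of_isCoprime hcop.symm hsq2
      have hs' : 3000*e^4+200*e^2+1 = s^2 := by
        rcases hs with hs | hs
        · exact hs
        · exfalso; nlinarith [sq_nonneg s, sq_nonneg e]
      exact hard e s hepos hs'.symm
    · -- x = 2t, 5 ∤ x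
      obtain ⟨t, ht⟩ := h2
      have htpos : 0 < t := by linarith
      obtain ⟨z₁, hz₁⟩ : (2:ℤ) ∣ z := by
        refine (by norm_num : Prime (2:ℤ)).dvd_of_dvd_pow (n := 2) ?_
        exact ⟨x*(3*x^4+20*x^2+10)/2, by rw [← h]; subst ht; ring_nf; omega⟩
      have heq : t * (24*t^4+40*t^2+5) = z₁^2 := by
        have h4 : (4:ℤ) * (t * (24*t^4+40*t^2+5)) = 4 * z₁^2 := by
          rw [ht, hz₁] at h; linear_combination h
        linarith
      have hcop : IsCoprime t (24*t^4+40*t^2+5) := by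
        have h5t : ¬ (5:ℤ) ∣ t := fun ⟨u,hu⟩ => h5 ⟨2*u, by rw [ht, hu]; ring⟩
        have h1 := (cop5 t h5t).add_mul_left_right (24*t^3+40*t)
        have h3 : 5 + t*(24*t^3+40*t) = 24*t^4+40*t^2+5 := by ring
        rwa [h3] at h1
      have hsq2 : (24*t^4+40*t^2+5) * t = z₁^2 := by linear_combination heq
      obtain ⟨v, hv⟩ := Int.sq_of_isCoprime hcop.symm hsq2
      have hv' : 24*t^4+40*t^2+5 = v^2 := by
        rcases hv with hv | hv
        · exact hv
        · exfalso; nlinarith [sq_nonneg v, sq_nonneg t]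
      have hcast : ((v:ZMod 8))^2 = 24*(t:ZMod 8)^4+40*(t:ZMod 8)^2+5 := by
        have := congrArg (Int.cast : ℤ → ZMod 8) hv'.symm; push_cast at this; exact this
      have hdec : ∀ T V : ZMod 8, V^2 ≠ 24*T^4+40*T^2+5 := by decide
      exact hdec _ _ hcast
    · -- x = 5g, x odd
      obtain ⟨g, hg⟩ := h5
      have hgpos : 0 < g := by linarith
      obtain ⟨z₁, hz₁⟩ : (5:ℤ) ∣ z := by
        refine (by norm_num : Prime (5:ℤ)).dvd_of_dvd_pow (n := 2) ?_
        exact ⟨x*(3*x^4+20*x^2+10)/5, by rw [← h]; subst hg; ring_nf; omega⟩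
      have heq : g * (375*g^4+100*g^2+2) = z₁^2 := by
        have h25 : (25:ℤ) * (g * (375*g^4+100*g^2+2)) = 25 * z₁^2 := by
          rw [hg, hz₁] at h; linear_combination h
        linarith
      have hcop : IsCoprime g (375*g^4+100*g^2+2) := by
        have h2g : ¬ (2:ℤ) ∣ g := fun ⟨u,hu⟩ => h2 ⟨5*u, by rw [hg, hu]; ring⟩
        have h1 := (cop2 g h2g).add_mul_left_right (375*g^3+100*g)
        have h3 : 2 + g*(375*g^3+100*g) = 375*g^4+100*g^2+2 := by ring
        rwa [h3] at h1
      have hsq2 : (375*g^4+100*g^2+2) * g = z₁^2 := by linear_combination heq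
      obtain ⟨v, hv⟩ := Int.sq_of_isCoprime hcop.symm hsq2
      have hv' : 375*g^4+100*g^2+2 = v^2 := by
        rcases hv with hv | hv
        · exact hv
        · exfalso; nlinarith [sq_nonneg v, sq_nonneg g]
      have hcast : ((v:ZMod 5))^2 = 375*(g:ZMod 5)^4+100*(g:ZMod 5)^2+2 := by
        have := congrArg (Int.cast : ℤ → ZMod 5) hv'.symm; push_cast at this; exact this
      have hdec : ∀ G V : ZMod 5, V^2 ≠ 375*G^4+100*G^2+2 := by decide
      exact hdec _ _ hcast
    · -- x odd, 5 ∤ x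
      have hcop : IsCoprime x (3*x^4+20*x^2+10) := by
        have h10 : IsCoprime x 10 := by
          have := (cop2 x h2).mul_right (cop5 x h5)
          simpa using this
        have h1 := h10.add_mul_left_right (3*x^3+20*x)
        have h3 : 10 + x*(3*x^3+20*x) = 3*x^4+20*x^2+10 := by ring
        rwa [h3] at h1
      have hsq2 : (3*x^4+20*x^2+10) * x = z^2 := by linear_combination h
      obtain ⟨v, hv⟩ := Int.sq_of_isCoprime hcop.symm hsq2
      have hv' : 3*x^4+20*x^2+10 = v^2 := by
        rcases hv with hv | hv
        · exact hv
        · exfalso; nlinarith [sq_nonneg v, sq_nonneg x]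
      have hx5 : (x : ZMod 5) ≠ 0 := by
        simpa [ZMod.intCast_zmod_eq_zero_iff_dvd] using h5
      have hcast : ((v:ZMod 5))^2 = 3*(x:ZMod 5)^4+20*(x:ZMod 5)^2+10 := by
        have := congrArg (Int.cast : ℤ → ZMod 5) hv'.symm; push_cast at this; exact this
      have hdec : ∀ X V : ZMod 5, X ≠ 0 → V^2 ≠ 3*X^4+20*X^2+10 := by decide
      exact hdec _ _ hx5 hcast
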